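/- Let d ≥ 3, ℓ ≥ 6, L ≥ 1, N ≥ 1 be integers. If γ is a *-connected path in ℤ^d such that {γ} ∩ S(L_N − 1) ≠ ∅ and {γ} ∩ S(2·L_N) ≠ ∅, then there exists a proper embedding 𝒯 ∈ Λ_N such that for every leaf m ∈ T_(N) one has {γ} ∩ S(𝒯(m), L_0 − 1) ≠ ∅ and {γ} ∩ S(𝒯(m), 2·L_0) ≠ ∅ (where L_0 = L). -/

import Mathlib

/-- The ℓ∞ norm of a point of ℤ^d. -/
def normInf {d : ℕ} (x : Fin d → ℤ) : ℤ :=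
  ((Finset.univ.sup fun i => (x i).natAbs : ℕ) : ℤ)

namespace PEC

variable {d : ℕ}

lemma normInf_nonneg (x : Fin d → ℤ) : 0 ≤ normInf x := Int.ofNat_nonneg _

lemma abs_le_normInf (x : Fin d → ℤ) (i : Fin d) : |x i| ≤ normInf x := by
  unfold normInf
  rw [Int.abs_eq_natAbs]
  exact_mod_cast Finset.le_sup (f := fun i => (x i).natAbs) (Finset.mem_univ i)

lemma normInf_le {x : Fin d → ℤ} {M : ℤ} (hM : 0 ≤ M) (h : ∀ i, |x i| ≤ M) :
    normInf x ≤ M := by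
  unfold normInf
  have h2 : (Finset.univ.sup fun i => (x i).natAbs) ≤ M.toNat := by
    apply Finset.sup_le
    intro i _
    have := h i
    rw [Int.abs_eq_natAbs] at this
    omega
  omega

lemma exists_abs_eq_normInf (hd : 0 < d) (x : Fin d → ℤ) :
    ∃ i, |x i| = normInf x := by
  obtain ⟨i, _, hi⟩ := Finset.exists_mem_eq_sup (Finset.univ : Finset (Fin d))
    (Finset.univ_nonempty_iff.2 (Fin.pos_iff_nonempty.mp hd)) (fun i => (x i).natAbs)
  refine ⟨i, ?_⟩
  unfold normInf
  rw [Int.abs_eq_natAbs, hi]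

lemma normInf_triangle (u w : Fin d → ℤ) :
    normInf (u + w) ≤ normInf u + normInf w := by
  apply normInf_le (add_nonneg (normInf_nonneg u) (normInf_nonneg w))
  intro i
  calc |(u + w) i| = |u i + w i| := rfl
    _ ≤ |u i| + |w i| := abs_add_le _ _
    _ ≤ normInf u + normInf w := add_le_add (abs_le_normInf u i) (abs_le_normInf w i)

lemma normInf_neg (u : Fin d → ℤ) : normInf (-u) = normInf u := by
  unfold normInf
  congr 2
  funext i
  exact Int.natAbs_neg _

lemma normInf_sub_comm (u w : Fin d → ℤ) : normInf (u - w) = normInf (w - u) := by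
  rw [← normInf_neg (u - w), neg_sub]

lemma normInf_lower (u w : Fin d → ℤ) :
    normInf u - normInf w ≤ normInf (u - w) := by
  have := normInf_triangle (u - w) w
  simp only [sub_add_cancel] at this
  omega

lemma abs_normInf_sub (u w : Fin d → ℤ) :
    |normInf u - normInf w| ≤ normInf (u - w) := by
  rw [abs_le]
  constructor
  · have := normInf_lower w u
    rw [normInf_sub_comm] at this
    omega
  · exact normInf_lower u w

lemma cross_up (f : ℕ → ℤ) (v : ℤ) (b : ℕ) :
    ∀ m a, b - a ≤ m → a ≤ b → (∀ i, a ≤ i → i < b → f (i + 1) ≤ f i + 1) →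
    f a ≤ v → v ≤ f b → ∃ t, a ≤ t ∧ t ≤ b ∧ f t = v := by
  intro m
  induction m with
  | zero =>
    intro a h1 h2 _ h4 h5
    have hab : a = b := by omega
    subst hab
    exact ⟨a, le_rfl, le_rfl, le_antisymm h4 h5⟩
  | succ m ih =>
    intro a h1 h2 hstep h4 h5
    by_cases hv : v ≤ f a
    · exact ⟨a, le_rfl, h2, le_antisymm h4 hv⟩
    · push_neg at hv
      have hab : a < b := by
        rcases eq_or_lt_of_le h2 with rfl | h
        · omega
        · exact h
      have h6 : f (a + 1) ≤ v := by have := hstep a le_rfl hab; omega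
      obtain ⟨t, ht1, ht2, ht3⟩ := ih (a + 1) (by omega) (by omega)
        (fun i hi hib => hstep i (by omega) hib) h6 h5
      exact ⟨t, by omega, ht2, ht3⟩

lemma ivt (f : ℕ → ℤ) (n : ℕ) (hstep : ∀ i < n, |f (i + 1) - f i| ≤ 1)
    (a b : ℕ) (ha : a ≤ n) (hb : b ≤ n) (v : ℤ) (h1 : f a ≤ v) (h2 : v ≤ f b) :
    ∃ t ≤ n, f t = v := by
  rcases le_total a b with hab | hab
  · obtain ⟨t, _, ht2, ht3⟩ := cross_up f v b (b - a) a le_rfl hab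
      (fun i _ hib => by have := abs_le.mp (hstep i (by omega)); omega) h1 h2
    exact ⟨t, by omega, ht3⟩
  · obtain ⟨t, _, ht2, ht3⟩ := cross_up (fun t => -f t) (-v) a (a - b) b le_rfl hab
      (fun i _ hib => by
        have := abs_le.mp (hstep i (by omega))
        show -f (i + 1) ≤ -f i + 1
        omega)
      (by simpa using h2) (by simpa using h1)
    refine ⟨t, by omega, ?_⟩
    have : -f t = -v := ht3
    omega

lemma round_coord (M : ℕ) (hM : 1 ≤ M) (t : ℤ) :
    ∃ u : ℤ, (M : ℤ) ∣ u ∧ |u| ≤ |t| ∧ |t - u| ≤ (M : ℤ) - 1 ∧ ((M : ℤ) ∣ t → u = t) := by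
  set a : ℕ := t.natAbs with ha
  set q : ℕ := a / M with hq
  have e1 : M * q ≤ a := by rw [hq, mul_comm]; exact Nat.div_mul_le_self a M
  have e2 : M * q + a % M = a := Nat.div_add_mod a M
  have e3 : a % M < M := Nat.mod_lt _ (by omega)
  refine ⟨t.sign * ((M * q : ℕ) : ℤ), ⟨t.sign * q, by push_cast; ring⟩, ?_⟩
  rcases lt_trichotomy t 0 with h | h | h
  · have hs : t.sign = -1 := Int.sign_eq_neg_one_iff_neg.mpr h
    have ht : t = -(a : ℤ) := by rw [ha]; omega
    have hu : t.sign * ((M * q : ℕ) : ℤ) = -((M * q : ℕ) : ℤ) := by rw [hs]; ring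
    rw [hu, ht]
    refine ⟨?_, ?_, ?_⟩
    · simp only [abs_neg, Int.abs_natCast]
      exact_mod_cast e1
    · have hd : (-(a : ℤ)) - (-((M * q : ℕ) : ℤ)) = -(((a % M : ℕ)) : ℤ) := by
        push_cast; omega
      rw [hd, abs_neg, Int.abs_natCast]
      omega
    · intro hdvd
      have h1 : (M : ℤ) ∣ (a : ℤ) := dvd_neg.mp hdvd
      have h2 : M ∣ a := Int.ofNat_dvd.mp h1
      have h3 : M * q = a := Nat.mul_div_cancel' h2
      rw [h3]
  · have ht0 : a = 0 := by rw [ha, h]; rfl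
    have hq0 : q = 0 := by rw [hq, ht0]; exact Nat.zero_div M
    rw [h]
    simp only [ht0, hq0, Int.sign_zero, Nat.mul_zero, Nat.cast_zero, mul_zero, sub_zero,
      abs_zero, zero_sub, neg_zero]
    refine ⟨le_rfl, by omega, fun _ => trivial⟩
  · have hs : t.sign = 1 := Int.sign_eq_one_iff_pos.mpr h
    have ht : t = (a : ℤ) := by rw [ha]; omega
    have hu : t.sign * ((M * q : ℕ) : ℤ) = ((M * q : ℕ) : ℤ) := by rw [hs]; ring
    rw [hu, ht]
    refine ⟨?_, ?_, ?_⟩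
    · simp only [Int.abs_natCast]
      exact_mod_cast e1
    · have hd : ((a : ℤ)) - (((M * q : ℕ) : ℤ)) = (((a % M : ℕ)) : ℤ) := by
        push_cast; omega
      rw [hd, Int.abs_natCast]
      omega
    · intro hdvd
      have h2 : M ∣ a := Int.ofNat_dvd.mp hdvd
      have h3 : M * q = a := Nat.mul_div_cancel' h2
      rw [h3]

lemma rounding (hd : 0 < d) (M r : ℕ) (hM : 1 ≤ M) (z : Fin d → ℤ)
    (hz : normInf z = (M : ℤ) * r) :
    ∃ y : Fin d → ℤ, (∀ i, (M : ℤ) ∣ y i) ∧ normInf y = (M : ℤ) * r ∧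
      normInf (z - y) ≤ (M : ℤ) - 1 := by
  choose u hu1 hu2 hu3 hu4 using round_coord M hM
  refine ⟨fun i => u (z i), fun i => hu1 _, ?_, ?_⟩
  · apply le_antisymm
    · apply normInf_le (by positivity)
      intro i
      exact (hu2 _).trans ((abs_le_normInf z i).trans_eq hz)
    · obtain ⟨i0, hi0⟩ := exists_abs_eq_normInf hd z
      have hdv : (M : ℤ) ∣ z i0 := by
        have h1 : (M : ℤ) ∣ |z i0| := by rw [hi0, hz]; exact Dvd.intro _ rfl
        exact (dvd_abs _ _).mp h1
      have h2 : u (z i0) = z i0 := hu4 _ hdv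
      calc (M : ℤ) * r = |z i0| := by rw [hi0, hz]
        _ = |u (z i0)| := by rw [h2]
        _ ≤ _ := abs_le_normInf (fun i => u (z i)) i0
  · apply normInf_le (by omega)
    intro i
    simpa using hu3 (z i)

/-- The crossing property at scale `k` around center `x`. -/
def Good (ℓ L n : ℕ) (γ : ℕ → Fin d → ℤ) (k : ℕ) (x : Fin d → ℤ) : Prop :=
  (∀ i, ((L : ℤ) * (ℓ : ℤ) ^ k) ∣ x i) ∧
  (∃ i ≤ n, normInf (γ i - x) = (L : ℤ) * (ℓ : ℤ) ^ k - 1) ∧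
  (∃ i ≤ n, normInf (γ i - x) = 2 * ((L : ℤ) * (ℓ : ℤ) ^ k))

lemma path_lip {n : ℕ} {γ : ℕ → Fin d → ℤ}
    (hpath : ∀ i < n, normInf (γ (i + 1) - γ i) = 1) (x : Fin d → ℤ) :
    ∀ i < n, |normInf (γ (i + 1) - x) - normInf (γ i - x)| ≤ 1 := by
  intro i hi
  have h := abs_normInf_sub (γ (i + 1) - x) (γ i - x)
  rw [sub_sub_sub_cancel_right, hpath i hi] at h
  exact h

lemma crossing_from {n : ℕ} {γ : ℕ → Fin d → ℤ}
    (hpath : ∀ i < n, normInf (γ (i + 1) - γ i) = 1)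
    (M : ℤ) (hM0 : 0 ≤ M) (x2 : Fin d → ℤ) (t1 t2 : ℕ) (h1 : t1 ≤ n) (h2 : t2 ≤ n)
    (hnear : normInf (γ t1 - x2) ≤ M - 1) (hfar : 2 * M ≤ normInf (γ t2 - x2)) :
    (∃ i ≤ n, normInf (γ i - x2) = M - 1) ∧ (∃ i ≤ n, normInf (γ i - x2) = 2 * M) := by
  have hl := path_lip hpath x2
  constructor
  · refine ivt (fun t => normInf (γ t - x2)) n hl t1 t2 h1 h2 (M - 1) hnear ?_
    show M - 1 ≤ normInf (γ t2 - x2)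
    omega
  · refine ivt (fun t => normInf (γ t - x2)) n hl t1 t2 h1 h2 (2 * M) ?_ hfar
    show normInf (γ t1 - x2) ≤ 2 * M
    omega

lemma step (hd : 0 < d) {ℓ L : ℕ} (hℓ : 2 ≤ ℓ) (hL : 1 ≤ L) {n : ℕ} {γ : ℕ → Fin d → ℤ}
    (hpath : ∀ i < n, normInf (γ (i + 1) - γ i) = 1) (b : Fin 2) (k : ℕ) (x : Fin d → ℤ) :
    ∃ y, Good ℓ L n γ (k + 1) x →
      Good ℓ L n γ k y ∧
      normInf (y - x) = (if b = 0 then 1 else 2) * ((L : ℤ) * (ℓ : ℤ) ^ (k + 1)) := by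
  by_cases hx : Good ℓ L n γ (k + 1) x
  case neg => exact ⟨x, fun h => absurd h hx⟩
  obtain ⟨hdvd, ⟨ti, hti, hfi⟩, ⟨tO, htO, hfo⟩⟩ := hx
  set M : ℕ := L * ℓ ^ k with hMdef
  have hM1 : 1 ≤ M := Nat.one_le_iff_ne_zero.mpr (by positivity)
  have hMc : (M : ℤ) = (L : ℤ) * (ℓ : ℤ) ^ k := by rw [hMdef]; push_cast; ring
  have hMpos : (1 : ℤ) ≤ (M : ℤ) := by exact_mod_cast hM1
  have hℓZ : (2 : ℤ) ≤ (ℓ : ℤ) := by exact_mod_cast hℓ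
  have hs : (L : ℤ) * (ℓ : ℤ) ^ (k + 1) = (M : ℤ) * (ℓ : ℕ) := by
    rw [hMc]; push_cast; ring
  have hMl2 : 2 * (M : ℤ) ≤ (M : ℤ) * (ℓ : ℕ) := by
    have := mul_le_mul_of_nonneg_left hℓZ (by omega : (0:ℤ) ≤ (M:ℤ))
    push_cast
    omega
  have hMdvd : ∀ i, (M : ℤ) ∣ x i := by
    intro i
    refine dvd_trans ⟨(ℓ : ℤ), ?_⟩ (hdvd i)
    rw [hMc]; ring
  rw [hs] at hfi hfo
  set s : ℤ := (M : ℤ) * (ℓ : ℕ) with hsd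
  have hs0 : (0 : ℤ) ≤ s := by omega
  have hb2 : b = 0 ∨ b = 1 := by
    fin_cases b
    · exact Or.inl rfl
    · exact Or.inr rfl
  rcases hb2 with hb | hb
  · -- first child : distance s
    have hv1 : normInf (γ ti - x) ≤ s := by omega
    have hv2 : s ≤ normInf (γ tO - x) := by omega
    obtain ⟨tm, htm, hftm⟩ := ivt (fun t => normInf (γ t - x)) n (path_lip hpath x)
      ti tO hti htO s hv1 hv2
    obtain ⟨yv, hy1, hy2, hy3⟩ := rounding hd M ℓ hM1 (γ tm - x) (hftm.trans hsd)
    have hy2' : normInf yv = s := by rw [hy2, hsd]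
    have hnear : normInf (γ tm - (x + yv)) ≤ (M : ℤ) - 1 := by
      have e : γ tm - (x + yv) = (γ tm - x) - yv := by abel
      rw [e]; exact hy3
    have hfar : 2 * (M : ℤ) ≤ normInf (γ tO - (x + yv)) := by
      have e : γ tO - (x + yv) = (γ tO - x) - yv := by abel
      have h2 := normInf_lower (γ tO - x) yv
      rw [hfo, hy2'] at h2
      rw [e]; omega
    have hcross := crossing_from hpath (M : ℤ) (by omega) (x + yv) tm tO htm htO hnear hfar
    refine ⟨x + yv, fun _ => ⟨⟨?_, ?_, ?_⟩, ?_⟩⟩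
    · intro i
      rw [Pi.add_apply, ← hMc]
      exact dvd_add (hMdvd i) (hy1 i)
    · rw [← hMc]; exact hcross.1
    · rw [← hMc]; exact hcross.2
    · rw [hb, if_pos rfl, one_mul, hs, add_sub_cancel_left]
      exact hy2'
  · -- second child : distance 2 * s
    obtain ⟨yv, hy1, hy2, hy3⟩ := rounding hd M (2 * ℓ) hM1 (γ tO - x)
      (hfo.trans (by rw [hsd]; push_cast; ring))
    have hy2' : normInf yv = 2 * s := by rw [hy2, hsd]; push_cast; ring
    have hnear : normInf (γ tO - (x + yv)) ≤ (M : ℤ) - 1 := by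
      have e : γ tO - (x + yv) = (γ tO - x) - yv := by abel
      rw [e]; exact hy3
    have hfar : 2 * (M : ℤ) ≤ normInf (γ ti - (x + yv)) := by
      have e : γ ti - (x + yv) = (γ ti - x) - yv := by abel
      have h2 := normInf_lower yv (γ ti - x)
      rw [hfi, hy2'] at h2
      rw [e, normInf_sub_comm]; omega
    have hcross := crossing_from hpath (M : ℤ) (by omega) (x + yv) tO ti htO hti hnear hfar
    refine ⟨x + yv, fun _ => ⟨⟨?_, ?_, ?_⟩, ?_⟩⟩
    · intro i
      rw [Pi.add_apply, ← hMc]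
      exact dvd_add (hMdvd i) (hy1 i)
    · rw [← hMc]; exact hcross.1
    · rw [← hMc]; exact hcross.2
    · rw [hb, if_neg (by decide), hs, add_sub_cancel_left]
      exact hy2'

/-- Iterated choice of children down the tree. -/
def build (c : Fin 2 → ℕ → (Fin d → ℤ) → (Fin d → ℤ)) :
    List (Fin 2) → ℕ → (Fin d → ℤ) → (Fin d → ℤ)
  | [], _, x => x
  | _ :: _, 0, x => x
  | b :: l, k + 1, x => build c l k (c b k x)

lemma build_append (c : Fin 2 → ℕ → (Fin d → ℤ) → (Fin d → ℤ)) :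
    ∀ (l : List (Fin 2)) (b : Fin 2) (k : ℕ) (x : Fin d → ℤ), l.length < k →
      build c (l ++ [b]) k x = c b (k - l.length - 1) (build c l k x) := by
  intro l
  induction l with
  | nil =>
    intro b k x hk
    match k, hk with
    | k + 1, _ => rfl
  | cons a l ih =>
    intro b k x hk
    match k, hk with
    | k + 1, hk =>
      have h1 : l.length < k := by simpa using hk
      show build c (l ++ [b]) k (c a k x) = _
      rw [ih b k (c a k x) h1]
      have e : k + 1 - (a :: l).length - 1 = k - l.length - 1 := by
        simp only [List.length_cons]; omega
      rw [e]
      rfl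

lemma build_pred (P : ℕ → (Fin d → ℤ) → Prop) (c : Fin 2 → ℕ → (Fin d → ℤ) → (Fin d → ℤ))
    (hc : ∀ b k x, P (k + 1) x → P k (c b k x)) :
    ∀ (l : List (Fin 2)) (k : ℕ) (x : Fin d → ℤ), l.length ≤ k → P k x →
      P (k - l.length) (build c l k x) := by
  intro l
  induction l with
  | nil => intro k x _ hP; simpa [build] using hP
  | cons a l ih =>
    intro k x hk hP
    match k, hk with
    | k + 1, hk =>
      have h1 : l.length ≤ k := by simpa using hk
      have h2 : P k (c a k x) := hc a k x hP
      have h3 := ih k (c a k x) h1 h2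
      have e : k + 1 - (a :: l).length = k - l.length := by
        simp only [List.length_cons]; omega
      rw [e]
      exact h3

end PEC

/-- A proper embedding of the binary tree of height `N` into ℤ^d, with scales
`L_k = L·ℓ^k` and renormalized lattices `𝓛_k = L_k·ℤ^d`. Tree vertices are encoded
as lists over `Fin 2` (only lists of length ≤ N are relevant):
(1) the root is mapped to 0; (2) a vertex at depth `k ≤ N` is mapped into `𝓛_{N-k}`;
(3) for a vertex `m` at depth `k < N`, its first child is at `ℓ∞`-distance `L_{N-k}`
from `m` and its second child at distance `2·L_{N-k}`. -/
def IsProperEmbedding (d ℓ L N : ℕ) (T : List (Fin 2) → (Fin d → ℤ)) : Prop :=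
  T [] = 0 ∧
  (∀ l : List (Fin 2), l.length ≤ N → ∀ i : Fin d,
    ((L : ℤ) * (ℓ : ℤ) ^ (N - l.length)) ∣ T l i) ∧
  (∀ l : List (Fin 2), l.length < N →
    normInf (T (l ++ [0]) - T l) = (L : ℤ) * (ℓ : ℤ) ^ (N - l.length) ∧
    normInf (T (l ++ [1]) - T l) = 2 * ((L : ℤ) * (ℓ : ℤ) ^ (N - l.length)))

/-- If a *-connected path `γ(0), …, γ(n)` meets the sphere `S(L·ℓ^N − 1)` and the
sphere `S(2·L·ℓ^N)`, then there is a proper embedding `𝒯` of the binary tree of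
height `N` such that for every leaf `m` (list of length `N`), the path meets both
spheres `S(𝒯(m), L − 1)` and `S(𝒯(m), 2L)`. -/
theorem proper_embedding_from_crossing (d ℓ L N : ℕ)
    (hd : 3 ≤ d) (hℓ : 6 ≤ ℓ) (hL : 1 ≤ L) (hN : 1 ≤ N)
    (n : ℕ) (γ : ℕ → Fin d → ℤ)
    (hpath : ∀ i < n, normInf (γ (i + 1) - γ i) = 1)
    (hin : ∃ i ≤ n, normInf (γ i) = (L : ℤ) * (ℓ : ℤ) ^ N - 1)
    (hout : ∃ i ≤ n, normInf (γ i) = 2 * ((L : ℤ) * (ℓ : ℤ) ^ N)) :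
    ∃ T : List (Fin 2) → (Fin d → ℤ), IsProperEmbedding d ℓ L N T ∧
      ∀ l : List (Fin 2), l.length = N →
        (∃ i ≤ n, normInf (γ i - T l) = (L : ℤ) - 1) ∧
        (∃ i ≤ n, normInf (γ i - T l) = 2 * (L : ℤ)) := by
  have hd0 : 0 < d := by omega
  have hℓ2 : 2 ≤ ℓ := by omega
  choose c hc using fun (b : Fin 2) (k : ℕ) (x : Fin d → ℤ) =>
    PEC.step hd0 hℓ2 hL hpath b k x
  have hcgood : ∀ (b : Fin 2) (k : ℕ) (x : Fin d → ℤ),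
      PEC.Good ℓ L n γ (k + 1) x → PEC.Good ℓ L n γ k (c b k x) :=
    fun b k x h => (hc b k x h).1
  have good0 : PEC.Good ℓ L n γ N (0 : Fin d → ℤ) := by
    refine ⟨fun i => by simp, ?_, ?_⟩
    · obtain ⟨i, hi, h⟩ := hin
      exact ⟨i, hi, by simpa using h⟩
    · obtain ⟨i, hi, h⟩ := hout
      exact ⟨i, hi, by simpa using h⟩
  set T : List (Fin 2) → (Fin d → ℤ) := fun l => PEC.build c l N 0 with hT
  have GT : ∀ l : List (Fin 2), l.length ≤ N → PEC.Good ℓ L n γ (N - l.length) (T l) :=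
    fun l h => PEC.build_pred (PEC.Good ℓ L n γ) c hcgood l N 0 h good0
  have hchild : ∀ (l : List (Fin 2)) (b : Fin 2), l.length < N →
      T (l ++ [b]) = c b (N - l.length - 1) (T l) := by
    intro l b hl
    exact PEC.build_append c l b N 0 hl
  have hdist : ∀ (l : List (Fin 2)) (b : Fin 2), l.length < N →
      normInf (T (l ++ [b]) - T l) =
        (if b = 0 then 1 else 2) * ((L : ℤ) * (ℓ : ℤ) ^ (N - l.length)) := by
    intro l b hl
    have he : N - l.length - 1 + 1 = N - l.length := by omega
    have hg : PEC.Good ℓ L n γ (N - l.length - 1 + 1) (T l) := by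
      rw [he]; exact GT l (le_of_lt hl)
    have h2 := (hc b (N - l.length - 1) (T l) hg).2
    rw [he] at h2
    rw [hchild l b hl]
    exact h2
  refine ⟨T, ⟨rfl, fun l hl i => (GT l hl).1 i, fun l hl => ?_⟩, fun l hl => ?_⟩
  · constructor
    · have := hdist l 0 hl
      rwa [if_pos rfl, one_mul] at this
    · have := hdist l 1 hl
      rwa [if_neg (by decide)] at this
  · have hg := GT l (le_of_eq hl)
    rw [hl, Nat.sub_self] at hg
    obtain ⟨-, h1, h2⟩ := hg
    constructor
    · obtain ⟨i, hi, h⟩ := h1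
      exact ⟨i, hi, by simpa using h⟩
    · obtain ⟨i, hi, h⟩ := h2
      exact ⟨i, hi, by simpa using h⟩
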